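/- If G and H are generalized geodetic graphs, then sg(G □ H) ≥ max{ sg(G), sg(H) }. -/

import Mathlib

open SimpleGraph

section Aux
variable {α β : Type*} {G : SimpleGraph α} {H : SimpleGraph β}

lemma length_ofBoxProd [DecidableEq α] [DecidableEq β] [DecidableRel G.Adj] [DecidableRel H.Adj]
    {x y : α × β} (w : (G □ H).Walk x y) :
    w.ofBoxProdLeft.length + w.ofBoxProdRight.length = w.length := by
  induction w with
  | nil => rfl
  | @cons x' y' z h w ih =>
    obtain ⟨a, b⟩ := x'
    obtain ⟨c, d⟩ := y'
    rcases h with ⟨hG, he⟩ | ⟨hH, he⟩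
    · simp only at he; subst he
      have hne : ¬ (H.Adj b b ∧ a = c) := by simp
      unfold Walk.ofBoxProdLeft Walk.ofBoxProdRight
      rw [Or.by_cases, Or.by_cases,
        dif_pos ⟨hG, rfl⟩, dif_neg hne]
      show w.ofBoxProdLeft.length + 1 + w.ofBoxProdRight.length = w.length + 1
      omega
    · simp only at he; subst he
      have hne : ¬ (G.Adj a a ∧ b = d) := by simp
      unfold Walk.ofBoxProdLeft Walk.ofBoxProdRight
      rw [Or.by_cases, Or.by_cases,
        dif_neg hne, dif_pos ⟨hH, rfl⟩]
      show w.ofBoxProdLeft.length + (w.ofBoxProdRight.length + 1) = w.length + 1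
      omega

lemma mem_support_ofBoxProd [DecidableEq α] [DecidableEq β] [DecidableRel G.Adj] [DecidableRel H.Adj]
    {x y : α × β} (w : (G □ H).Walk x y) {z : α × β} (hz : z ∈ w.support) :
    z.1 ∈ w.ofBoxProdLeft.support ∧ z.2 ∈ w.ofBoxProdRight.support := by
  induction w with
  | nil => simp_all
  | @cons x' y' z' h w ih =>
    obtain ⟨a, b⟩ := x'
    obtain ⟨c, d⟩ := y'
    rw [Walk.support_cons, List.mem_cons] at hz
    rcases h with ⟨hG, he⟩ | ⟨hH, he⟩
    · simp only at he; subst he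
      have hne : ¬ (H.Adj b b ∧ a = c) := by simp
      unfold Walk.ofBoxProdLeft Walk.ofBoxProdRight
      rw [Or.by_cases, Or.by_cases,
        dif_pos ⟨hG, rfl⟩, dif_neg hne]
      rcases hz with rfl | hz
      · exact ⟨Walk.start_mem_support _, Walk.start_mem_support _⟩
      · exact ⟨by rw [Walk.support_cons]; exact List.mem_cons_of_mem _ (ih hz).1, (ih hz).2⟩
    · simp only at he; subst he
      have hne : ¬ (G.Adj a a ∧ b = d) := by simp
      unfold Walk.ofBoxProdLeft Walk.ofBoxProdRight
      rw [Or.by_cases, Or.by_cases,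
        dif_neg hne, dif_pos ⟨hH, rfl⟩]
      rcases hz with rfl | hz
      · exact ⟨Walk.start_mem_support _, Walk.start_mem_support _⟩
      · exact ⟨(ih hz).1, by rw [Walk.support_cons]; exact List.mem_cons_of_mem _ (ih hz).2⟩


lemma boxProd_dist' [DecidableEq α] [DecidableEq β] [DecidableRel G.Adj] [DecidableRel H.Adj]
    (hG : G.Connected) (hH : H.Connected)
    (hlen : ∀ {x y : α × β} (w : (G □ H).Walk x y),
      w.ofBoxProdLeft.length + w.ofBoxProdRight.length = w.length)
    (x y : α × β) :
    (G □ H).dist x y = G.dist x.1 y.1 + H.dist x.2 y.2 := by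
  obtain ⟨a, b⟩ := x
  obtain ⟨c, d⟩ := y
  apply le_antisymm
  · obtain ⟨p, hp⟩ := hG.exists_walk_length_eq_dist a c
    obtain ⟨q, hq⟩ := hH.exists_walk_length_eq_dist b d
    have := dist_le ((p.boxProdLeft H b).append (q.boxProdRight G c))
    rw [Walk.length_append] at this
    have e1 : (p.boxProdLeft H b).length = G.dist a c := (Walk.length_map _ _).trans hp
    have e2 : (q.boxProdRight G c).length = H.dist b d := (Walk.length_map _ _).trans hq
    rw [e1, e2] at this
    exact this
  · obtain ⟨w, hw⟩ := (hG.boxProd hH).exists_walk_length_eq_dist (a, b) (c, d)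
    calc G.dist a c + H.dist b d ≤ w.ofBoxProdLeft.length + w.ofBoxProdRight.length :=
          add_le_add (dist_le _) (dist_le _)
      _ = w.length := hlen w
      _ = _ := hw

lemma exists_sgChoice {V : Type*} [Fintype V] {G : SimpleGraph V} (hconn : G.Connected) :
    ∃ p : ∀ u v : V, G.Walk u v,
      ∀ u v : V, (p u v).IsPath ∧ (p u v).length = G.dist u v ∧ p v u = (p u v).reverse := by
  classical
  letI : LinearOrder V := LinearOrder.lift' (Fintype.equivFin V) (Fintype.equivFin V).injective
  choose q hq1 hq2 using fun u v => hconn.exists_path_of_dist u v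
  have hnil : ∀ u : V, q u u = Walk.nil := by
    intro u
    have : (q u u).length = 0 := by rw [hq2]; exact SimpleGraph.dist_self
    exact (Walk.length_eq_zero_iff.1 this).eq_nil
  refine ⟨fun u v => if u ≤ v then q u v else (q v u).reverse, fun u v => ?_⟩
  dsimp only
  refine ⟨?_, ?_, ?_⟩
  · by_cases h : u ≤ v
    · rw [if_pos h]; exact hq1 u v
    · rw [if_neg h]; exact (hq1 v u).reverse
  · by_cases h : u ≤ v
    · rw [if_pos h]; exact hq2 u v
    · rw [if_neg h, Walk.length_reverse, hq2, SimpleGraph.dist_comm]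
  · rcases lt_trichotomy u v with h | rfl | h
    · rw [if_pos h.le, if_neg (not_le.2 h)]
    · simp [hnil]
    · rw [if_pos h.le, if_neg (not_le.2 h), Walk.reverse_reverse]

end Aux

/-- A choice of one fixed shortest path (geodesic) between each pair of vertices,
symmetric in the sense that the path from `v` to `u` is the reverse of the one
from `u` to `v`. -/
def StrongGeodeticChoice {V : Type*} (G : SimpleGraph V) (p : ∀ u v : V, G.Walk u v) : Prop :=
  ∀ u v : V, (p u v).IsPath ∧ (p u v).length = G.dist u v ∧ p v u = (p u v).reverse

/-- `S` is a strong geodetic set of `G`: one can fix one shortest path between each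
pair of vertices of `S` so that every vertex of `G` lies on some fixed path. -/
def IsStrongGeodeticSet {V : Type*} (G : SimpleGraph V) (S : Set V) : Prop :=
  ∃ p : ∀ u v : V, G.Walk u v, StrongGeodeticChoice G p ∧
    ∀ w : V, ∃ u ∈ S, ∃ v ∈ S, w ∈ (p u v).support

/-- The strong geodetic number of `G`. -/
noncomputable def sg {V : Type*} (G : SimpleGraph V) : ℕ :=
  sInf {n | ∃ S : Set V, S.ncard = n ∧ IsStrongGeodeticSet G S}

/-- The strong geodetic core number of `G`: the minimum, over minimum strong
geodetic sets `S` together with a choice of fixed geodesics witnessing them,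
of the size of a subset `X ⊆ S` such that the fixed paths with an endpoint in `X`
already cover all vertices. -/
noncomputable def sgc {V : Type*} (G : SimpleGraph V) : ℕ :=
  sInf {k | ∃ (S X : Set V) (p : ∀ u v : V, G.Walk u v),
    StrongGeodeticChoice G p ∧ S.ncard = sg G ∧
    (∀ w : V, ∃ u ∈ S, ∃ v ∈ S, w ∈ (p u v).support) ∧
    X ⊆ S ∧ X.ncard = k ∧
    (∀ w : V, ∃ u ∈ X, ∃ v ∈ S, w ∈ (p u v).support)}

/-- `A` is a geodetic set: every vertex lies on some shortest path between two
vertices of `A`. -/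
def IsGeodeticSet {V : Type*} (G : SimpleGraph V) (A : Set V) : Prop :=
  ∀ w : V, ∃ u ∈ A, ∃ v ∈ A, ∃ q : G.Walk u v, q.length = G.dist u v ∧ w ∈ q.support

/-- The geodetic number of `G`. -/
noncomputable def geodeticNumber {V : Type*} (G : SimpleGraph V) : ℕ :=
  sInf {n | ∃ A : Set V, A.ncard = n ∧ IsGeodeticSet G A}

theorem stmt14 {V W : Type*} [Fintype V] [Fintype W]
    (G : SimpleGraph V) (H : SimpleGraph W) (hG : G.Connected) (hH : H.Connected)
    (hgenG : geodeticNumber G = sg G) (hgenH : geodeticNumber H = sg H) :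
    sg (G □ H) ≥ max (sg G) (sg H) := by
  classical
  have hconnP : (G □ H).Connected := hG.boxProd hH
  have hlenL : ∀ {x y : V × W} (w : (G □ H).Walk x y),
      w.ofBoxProdLeft.length + w.ofBoxProdRight.length = w.length := fun w => length_ofBoxProd w
  have hdist := boxProd_dist' hG hH hlenL
  -- the defining set of `sg (G □ H)` is nonempty
  obtain ⟨p0, hp0⟩ := exists_sgChoice hconnP
  have hmem : sg (G □ H) ∈
      {n | ∃ S : Set (V × W), S.ncard = n ∧ IsStrongGeodeticSet (G □ H) S} := by
    apply Nat.sInf_mem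
    exact ⟨(Set.univ : Set (V × W)).ncard, Set.univ, rfl, p0, hp0,
      fun w => ⟨w, trivial, w, trivial, SimpleGraph.Walk.start_mem_support _⟩⟩
  obtain ⟨S, hScard, pS, hpS, hcov⟩ := hmem
  have key : ∀ (u v : V × W),
      (pS u v).ofBoxProdLeft.length = G.dist u.1 v.1 ∧
      (pS u v).ofBoxProdRight.length = H.dist u.2 v.2 := by
    intro u v
    have h1 := (hpS u v).2.1
    have h2 := hdist u v
    have h3 := hlenL (pS u v)
    have h4 := SimpleGraph.dist_le (pS u v).ofBoxProdLeft
    have h5 := SimpleGraph.dist_le (pS u v).ofBoxProdRight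
    omega
  have h1 : sg G ≤ sg (G □ H) := by
    rw [← hgenG]
    have hA : IsGeodeticSet G (Prod.fst '' S) := by
      intro w
      obtain ⟨b⟩ := hH.nonempty
      obtain ⟨u, hu, v, hv, hw⟩ := hcov (w, b)
      exact ⟨u.1, ⟨u, hu, rfl⟩, v.1, ⟨v, hv, rfl⟩, (pS u v).ofBoxProdLeft,
        (key u v).1, (mem_support_ofBoxProd (pS u v) hw).1⟩
    calc geodeticNumber G ≤ (Prod.fst '' S).ncard := Nat.sInf_le ⟨Prod.fst '' S, rfl, hA⟩
      _ ≤ S.ncard := Set.ncard_image_le (Set.toFinite _)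
      _ = sg (G □ H) := hScard
  have h2 : sg H ≤ sg (G □ H) := by
    rw [← hgenH]
    have hA : IsGeodeticSet H (Prod.snd '' S) := by
      intro w
      obtain ⟨a⟩ := hG.nonempty
      obtain ⟨u, hu, v, hv, hw⟩ := hcov (a, w)
      exact ⟨u.2, ⟨u, hu, rfl⟩, v.2, ⟨v, hv, rfl⟩, (pS u v).ofBoxProdRight,
        (key u v).2, (mem_support_ofBoxProd (pS u v) hw).2⟩
    calc geodeticNumber H ≤ (Prod.snd '' S).ncard := Nat.sInf_le ⟨Prod.snd '' S, rfl, hA⟩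
      _ ≤ S.ncard := Set.ncard_image_le (Set.toFinite _)
      _ = sg (G □ H) := hScard
  exact max_le h1 h2
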